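/- arXiv:2105.02442 — 3 statements merged into one kernel-verified Lean document; each statement's English description precedes it below -/
import Mathlib

section
/- Let L be a finite nonabelian simple group whose order is divisible by a prime r, and let x ∈ Aut(L) be nontrivial. Suppose x leaves invariant a subgroup H of L and a normal subgroup N of H, thus inducing an automorphism x̄ of H/N. Suppose further that H/N contains a nonabelian simple x̄-invariant subgroup L̄ on which x̄ acts nontrivially and whose order is divisible by r. Then β_r(x,L) ≤ β_r(x̄, L̄), where in the right-hand side x̄ is regarded as an automorphism of L̄. -/
/-- The conjugate `x^g` of an automorphism `x` of `L` by the inner automorphism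
induced by `g ∈ L` (identifying `L` with its inner automorphisms in `Aut L`). -/
def autConj {L : Type} [Group L] (x : MulAut L) (g : L) : MulAut L :=
  (MulAut.conj g)⁻¹ * x * MulAut.conj g

/-- `betaLE x t m` says that `β_t(x, L) ≤ m`: there exist `g₁, …, g_m ∈ L` such that
`t` divides the order of the subgroup of `Aut L` generated by `x^{g₁}, …, x^{g_m}`. -/
def betaLE {L : Type} [Group L] (x : MulAut L) (t m : ℕ) : Prop :=
  ∃ g : Fin m → L,
    t ∣ Nat.card (Subgroup.closure (Set.range fun i => autConj x (g i)) : Subgroup (MulAut L))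

/-- The subgroup of `MulAut G` of automorphisms preserving a subgroup `H`. -/
def presSub {G : Type*} [Group G] (H : Subgroup G) : Subgroup (MulAut G) where
  carrier := {f | H.map f.toMonoidHom = H}
  one_mem' := by
    show H.map (1 : MulAut G).toMonoidHom = H
    ext g; simp [Subgroup.mem_map]
  mul_mem' := by
    intro a b ha hb
    show H.map (a * b).toMonoidHom = H
    have : (a * b).toMonoidHom = a.toMonoidHom.comp b.toMonoidHom := by ext; rfl
    rw [this, ← Subgroup.map_map]
    simp only [Set.mem_setOf_eq] at ha hb
    rw [hb, ha]
  inv_mem' := by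
    intro a ha
    simp only [Set.mem_setOf_eq] at ha ⊢
    conv_lhs => rw [← ha]
    rw [Subgroup.map_map]
    have : a⁻¹.toMonoidHom.comp a.toMonoidHom = MonoidHom.id G := by
      ext g; exact a.left_inv g
    rw [this]
    exact Subgroup.map_id H

lemma mem_presSub {G : Type*} [Group G] {H : Subgroup G} {f : MulAut G} :
    f ∈ presSub H ↔ H.map f.toMonoidHom = H := Iff.rfl

lemma conj_mem_presSub {G : Type*} [Group G] {H : Subgroup G} {h : G} (hh : h ∈ H) :
    MulAut.conj h ∈ presSub H := by
  rw [mem_presSub]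
  ext g
  simp only [Subgroup.mem_map, MulAut.conj_apply, MulEquiv.coe_toMonoidHom]
  constructor
  · rintro ⟨y, hy, rfl⟩
    exact Subgroup.mul_mem _ (Subgroup.mul_mem _ hh hy) (Subgroup.inv_mem _ hh)
  · intro hg
    refine ⟨h⁻¹ * g * h, ?_, by group⟩
    exact Subgroup.mul_mem _ (Subgroup.mul_mem _ (Subgroup.inv_mem _ hh) hg) hh

/-- Restriction of preserving automorphisms to the subgroup. -/
def resHom {G : Type*} [Group G] (H : Subgroup G) : presSub H →* MulAut ↥H :=
  MonoidHom.mk' (fun f => ((f : MulAut G).subgroupMap H).trans (MulEquiv.subgroupCongr f.2))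
    (by
      intro a b
      ext h
      rfl)

lemma resHom_apply_coe {G : Type*} [Group G] (H : Subgroup G) (f : presSub H) (h : ↥H) :
    ((resHom H f h : ↥H) : G) = (f : MulAut G) (h : G) := rfl

/-- Automorphisms preserving a normal subgroup descend to the quotient. -/
def quotHom {G : Type*} [Group G] (N : Subgroup G) [N.Normal] : presSub N →* MulAut (G ⧸ N) :=
  MonoidHom.mk' (fun f => QuotientGroup.congr N N (f : MulAut G) f.2)
    (by
      intro a b
      ext q
      induction q using QuotientGroup.induction_on with
      | H g => rfl)

lemma quotHom_apply_mk {G : Type*} [Group G] (N : Subgroup G) [N.Normal] (f : presSub N) (g : G) :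
    quotHom N f (QuotientGroup.mk g) = QuotientGroup.mk ((f : MulAut G) g) := rfl

lemma conj_mem_presSub_of_normal {G : Type*} [Group G] (N : Subgroup G) [N.Normal] (g : G) :
    MulAut.conj g ∈ presSub N := by
  rw [mem_presSub]
  ext k
  simp only [Subgroup.mem_map, MulAut.conj_apply, MulEquiv.coe_toMonoidHom]
  constructor
  · rintro ⟨y, hy, rfl⟩
    exact Subgroup.Normal.conj_mem ‹N.Normal› y hy g
  · intro hk
    exact ⟨g⁻¹ * k * g, by simpa using Subgroup.Normal.conj_mem ‹N.Normal› k hk g⁻¹, by group⟩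

lemma resHom_conj {G : Type*} [Group G] (H : Subgroup G) (h : ↥H)
    (p : MulAut.conj (h : G) ∈ presSub H) :
    resHom H ⟨MulAut.conj (h : G), p⟩ = MulAut.conj h := by
  ext k
  rw [resHom_apply_coe]
  rfl

lemma quotHom_conj {G : Type*} [Group G] (N : Subgroup G) [N.Normal] (g : G)
    (p : MulAut.conj g ∈ presSub N) :
    quotHom N ⟨MulAut.conj g, p⟩ = MulAut.conj (QuotientGroup.mk g : G ⧸ N) := by
  ext q
  induction q using QuotientGroup.induction_on with
  | H k =>
    rw [quotHom_apply_mk]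
    rfl

lemma card_map_dvd' {G G' : Type*} [Group G] [Group G'] (f : G →* G') (K : Subgroup G) :
    Nat.card (K.map f) ∣ Nat.card K :=
  Subgroup.card_dvd_of_surjective (f.subgroupMap K) (f.subgroupMap_surjective K)

lemma card_map_of_injective {G G' : Type*} [Group G] [Group G'] (f : G →* G')
    (hf : Function.Injective f) (K : Subgroup G) :
    Nat.card (K.map f) = Nat.card K :=
  (Nat.card_congr (K.equivMapOfInjective f hf).toEquiv).symm

theorem statement_3 (L : Type) [Group L] [Finite L] (hLsimple : IsSimpleGroup L)
    (hLnonab : ∃ a b : L, a * b ≠ b * a)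
    (r : ℕ) (hr : r.Prime) (hrL : r ∣ Nat.card L)
    (x : MulAut L) (hx : x ≠ 1)
    -- `x` leaves invariant a subgroup `H` of `L` …
    (H : Subgroup L) (hHx : Subgroup.map x.toMonoidHom H = H)
    -- … and a normal subgroup `N` of `H`, …
    (N : Subgroup ↥H) [N.Normal]
    -- the restriction of `x` to `H` …
    (xH : MulAut ↥H) (hxH : ∀ h : ↥H, ((xH h : ↥H) : L) = x (h : L))
    (hNx : Subgroup.map xH.toMonoidHom N = N)
    -- … thus inducing an automorphism `x̄` of `H/N`.
    (xbar : MulAut (↥H ⧸ N))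
    (hxbar : ∀ h : ↥H, xbar (QuotientGroup.mk h) = QuotientGroup.mk (xH h))
    -- `H/N` contains a nonabelian simple `x̄`-invariant subgroup `L̄` …
    (Lbar : Subgroup (↥H ⧸ N)) (hLbarSimple : IsSimpleGroup ↥Lbar)
    (hLbarNonab : ∃ a b : ↥Lbar, a * b ≠ b * a)
    (hLbarx : Subgroup.map xbar.toMonoidHom Lbar = Lbar)
    -- … on which `x̄` acts nontrivially, and whose order is divisible by `r`
    (hact : ∃ a : ↥H ⧸ N, a ∈ Lbar ∧ xbar a ≠ a)
    (hrLbar : r ∣ Nat.card ↥Lbar)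
    -- `x̄` regarded as an automorphism of `L̄`
    (xres : MulAut ↥Lbar) (hxres : ∀ a : ↥Lbar, ((xres a : ↥Lbar) : ↥H ⧸ N) = xbar (a : ↥H ⧸ N)) :
    -- conclusion: `β_r(x, L) ≤ β_r(x̄, L̄)`
    ∀ m : ℕ, betaLE xres r m → betaLE x r m := by
  rintro m ⟨g, hg⟩
  -- choose lifts in H of the images of g i in H ⧸ N
  choose h hh using fun i => QuotientGroup.mk_surjective ((g i : ↥Lbar) : ↥H ⧸ N)
  refine ⟨fun i => ((h i : ↥H) : L), ?_⟩
  -- the three restriction homomorphisms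
  set B1 : Subgroup (MulAut L) := presSub H with hB1
  have px : x ∈ B1 := hHx
  have pc : ∀ i, MulAut.conj ((h i : ↥H) : L) ∈ B1 := fun i => conj_mem_presSub (h i).2
  set a1 : Fin m → ↥B1 := fun i =>
    (⟨MulAut.conj ((h i : ↥H) : L), pc i⟩ : ↥B1)⁻¹ * ⟨x, px⟩ * ⟨MulAut.conj ((h i : ↥H) : L), pc i⟩
    with ha1
  have ha1v : ∀ i, (a1 i : MulAut L) = autConj x ((h i : ↥H) : L) := fun i => rfl
  set ρ1 : ↥B1 →* MulAut ↥H := resHom H with hρ1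
  -- identify the restrictions
  have hρ1x : ρ1 ⟨x, px⟩ = xH := by
    ext k
    rw [hρ1, resHom_apply_coe]
    exact (hxH k).symm
  have hρ1c : ∀ i, ρ1 ⟨MulAut.conj ((h i : ↥H) : L), pc i⟩ = MulAut.conj (h i) := fun i =>
    resHom_conj H (h i) (pc i)
  have hρ1a : ∀ i, ρ1 (a1 i) = autConj xH (h i) := by
    intro i
    rw [ha1]
    simp only [map_mul, map_inv, hρ1x, hρ1c]
    rfl
  -- level 2
  have pxH : xH ∈ presSub N := hNx
  have pcH : ∀ i, MulAut.conj (h i) ∈ presSub N := fun i => conj_mem_presSub_of_normal N (h i)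
  have pa1 : ∀ i, ρ1 (a1 i) ∈ presSub N := by
    intro i
    rw [hρ1a]
    exact Subgroup.mul_mem _ (Subgroup.mul_mem _ (Subgroup.inv_mem _ (pcH i)) pxH) (pcH i)
  set ρ2 : ↥(presSub N) →* MulAut (↥H ⧸ N) := quotHom N with hρ2
  have hρ2x : ρ2 ⟨xH, pxH⟩ = xbar := by
    ext q
    induction q using QuotientGroup.induction_on with
    | H k =>
      rw [hρ2, quotHom_apply_mk]
      exact (hxbar k).symm
  have hρ2c : ∀ i, ρ2 ⟨MulAut.conj (h i), pcH i⟩ = MulAut.conj (QuotientGroup.mk (h i) : ↥H ⧸ N) :=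
    fun i => quotHom_conj N (h i) (pcH i)
  have hρ2a : ∀ i, ρ2 ⟨ρ1 (a1 i), pa1 i⟩ = autConj xbar ((g i : ↥Lbar) : ↥H ⧸ N) := by
    intro i
    have : (⟨ρ1 (a1 i), pa1 i⟩ : ↥(presSub N)) =
        (⟨MulAut.conj (h i), pcH i⟩ : ↥(presSub N))⁻¹ * ⟨xH, pxH⟩ * ⟨MulAut.conj (h i), pcH i⟩ := by
      apply Subtype.ext
      simpa [autConj] using hρ1a i
    rw [this]
    simp only [map_mul, map_inv, hρ2x, hρ2c, hh]
    rfl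
  -- level 3
  have pxbar : xbar ∈ presSub Lbar := hLbarx
  have pcb : ∀ i, MulAut.conj ((g i : ↥Lbar) : ↥H ⧸ N) ∈ presSub Lbar := fun i =>
    conj_mem_presSub (g i).2
  have pa2 : ∀ i, ρ2 ⟨ρ1 (a1 i), pa1 i⟩ ∈ presSub Lbar := by
    intro i
    rw [hρ2a]
    exact Subgroup.mul_mem _ (Subgroup.mul_mem _ (Subgroup.inv_mem _ (pcb i)) pxbar) (pcb i)
  set ρ3 : ↥(presSub Lbar) →* MulAut ↥Lbar := resHom Lbar with hρ3
  have hρ3x : ρ3 ⟨xbar, pxbar⟩ = xres := by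
    ext k
    rw [hρ3, resHom_apply_coe]
    exact (hxres k).symm
  have hρ3a : ∀ i, ρ3 ⟨ρ2 ⟨ρ1 (a1 i), pa1 i⟩, pa2 i⟩ = autConj xres (g i) := by
    intro i
    have : (⟨ρ2 ⟨ρ1 (a1 i), pa1 i⟩, pa2 i⟩ : ↥(presSub Lbar)) =
        (⟨MulAut.conj ((g i : ↥Lbar) : ↥H ⧸ N), pcb i⟩ : ↥(presSub Lbar))⁻¹ * ⟨xbar, pxbar⟩ *
          ⟨MulAut.conj ((g i : ↥Lbar) : ↥H ⧸ N), pcb i⟩ := by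
      apply Subtype.ext
      simpa [autConj] using hρ2a i
    rw [this]
    simp only [map_mul, map_inv, hρ3x, resHom_conj]
    rfl
  -- assemble the composite homomorphism
  set B2 : Subgroup ↥B1 := (presSub N).comap ρ1 with hB2
  set τ2 : ↥B2 →* ↥(presSub N) := (ρ1.domRestrict B2).codRestrict (presSub N) (fun a => a.2) with hτ2
  set ρ2' : ↥B2 →* MulAut (↥H ⧸ N) := ρ2.comp τ2 with hρ2'
  set B3 : Subgroup ↥B2 := (presSub Lbar).comap ρ2' with hB3
  set τ3 : ↥B3 →* ↥(presSub Lbar) := (ρ2'.domRestrict B3).codRestrict (presSub Lbar) (fun a => a.2)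
    with hτ3
  set Φ : ↥B3 →* MulAut ↥Lbar := ρ3.comp τ3 with hΦ
  -- the generators as elements of B3
  have hb2 : ∀ i, a1 i ∈ B2 := fun i => pa1 i
  have hτ2a : ∀ i, τ2 ⟨a1 i, hb2 i⟩ = ⟨ρ1 (a1 i), pa1 i⟩ := fun i => rfl
  have hb3 : ∀ i, (⟨a1 i, hb2 i⟩ : ↥B2) ∈ B3 := by
    intro i
    show ρ2' ⟨a1 i, hb2 i⟩ ∈ presSub Lbar
    rw [hρ2', MonoidHom.comp_apply, hτ2a]
    exact pa2 i
  set b : Fin m → ↥B3 := fun i => ⟨⟨a1 i, hb2 i⟩, hb3 i⟩ with hb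
  have hΦb : ∀ i, Φ (b i) = autConj xres (g i) := by
    intro i
    have hτ3b : τ3 (b i) = ⟨ρ2 ⟨ρ1 (a1 i), pa1 i⟩, pa2 i⟩ := by
      apply Subtype.ext
      show ρ2' ⟨a1 i, hb2 i⟩ = ρ2 ⟨ρ1 (a1 i), pa1 i⟩
      rw [hρ2', MonoidHom.comp_apply, hτ2a]
    rw [hΦ, MonoidHom.comp_apply, hτ3b, hρ3a]
  -- the inclusion homomorphism
  set ι : ↥B3 →* MulAut L := B1.subtype.comp (B2.subtype.comp B3.subtype) with hι
  have hιinj : Function.Injective ι := by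
    rw [hι]
    exact B1.subtype_injective.comp (B2.subtype_injective.comp B3.subtype_injective)
  have hιb : ∀ i, ι (b i) = autConj x ((h i : ↥H) : L) := fun i => rfl
  set K3 : Subgroup ↥B3 := Subgroup.closure (Set.range b) with hK3
  have hmapι : K3.map ι = Subgroup.closure (Set.range fun i => autConj x ((h i : ↥H) : L)) := by
    rw [hK3, MonoidHom.map_closure, ← Set.range_comp]
    congr 1
  have hmapΦ : K3.map Φ = Subgroup.closure (Set.range fun i => autConj xres (g i)) := by
    rw [hK3, MonoidHom.map_closure, ← Set.range_comp]
    congr 1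
    ext y
    simp only [Set.mem_range, Function.comp_apply, hΦb]
  have hcard : Nat.card (Subgroup.closure (Set.range fun i => autConj x ((h i : ↥H) : L)) :
      Subgroup (MulAut L)) = Nat.card K3 := by
    rw [← hmapι]
    exact card_map_of_injective ι hιinj K3
  rw [hcard]
  calc r ∣ Nat.card (K3.map Φ) := by rw [hmapΦ]; exact hg
    _ ∣ Nat.card K3 := card_map_dvd' Φ K3
end

section
/- Let q ≥ 4 be a prime power, L = PSL_2(q), and let r be an odd prime that divides |L| but does not divide q. Then for every involution x of the group PGL_2(q) (which contains L = PSL_2(q) as a normal subgroup), the least m for which there exist g_1, …, g_m ∈ L with r dividing the order of the subgroup ⟨x^{g_1}, …, x^{g_m}⟩ of PGL_2(q) equals 2; in particular, there exist g_1, g_2 ∈ L such that r divides |⟨x^{g_1}, x^{g_2}⟩|. -/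
open Matrix

/-- `PGL_n(q)`: the quotient of `GL_n(F_q)` by its center (the scalar matrices). -/
abbrev PGL (n : ℕ) (F : Type) [Field F] : Type :=
  GL (Fin n) F ⧸ Subgroup.center (GL (Fin n) F)

/-- `PSL_n(q)` regarded as a (normal) subgroup of `PGL_n(q)`: the image in `PGL_n(q)`
of `SL_n(F_q) ≤ GL_n(F_q)`. -/
def PSLinPGL (n : ℕ) (F : Type) [Field F] : Subgroup (PGL n F) :=
  Subgroup.map (QuotientGroup.mk' (Subgroup.center (GL (Fin n) F)))
    (Matrix.SpecialLinearGroup.toGL (n := Fin n) (R := F)).range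


section Aux
variable {F : Type} [Field F]

local notation "M2" => Matrix (Fin 2) (Fin 2) F


@[simp] theorem toGL_val (S : Matrix.SpecialLinearGroup (Fin 2) F) :
    ((Matrix.SpecialLinearGroup.toGL S : GL (Fin 2) F) : M2) = (S : M2) := rfl

theorem scalar_mem_center (A : GL (Fin 2) F) (a : F) (h : (A : M2) = a • 1) :
    A ∈ Subgroup.center (GL (Fin 2) F) := by
  rw [Subgroup.mem_center_iff]
  intro g
  ext : 1
  push_cast
  rw [h, Matrix.mul_smul, Matrix.smul_mul, mul_one, one_mul]

theorem center_is_scalar (A : GL (Fin 2) F) (h : A ∈ Subgroup.center (GL (Fin 2) F)) :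
    ∃ a : F, (A : M2) = a • 1 := by
  rw [Subgroup.mem_center_iff] at h
  have h1 := h (Matrix.SpecialLinearGroup.toGL ⟨!![1,1;0,1], by simp [Matrix.det_fin_two_of]⟩)
  have h2 := h (Matrix.SpecialLinearGroup.toGL ⟨!![1,0;1,1], by simp [Matrix.det_fin_two_of]⟩)
  have e1 : (!![1,1;0,1] : M2) * (A : M2) = (A : M2) * !![1,1;0,1] := by
    exact congrArg Units.val h1
  have e2 : (!![1,0;1,1] : M2) * (A : M2) = (A : M2) * !![1,0;1,1] := by
    exact congrArg Units.val h2
  have c10 : (A : M2) 1 0 = 0 := by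
    have := congrFun (congrFun e1 0) 0
    simpa [Matrix.mul_apply, Fin.sum_univ_two] using this.symm
  have c01 : (A : M2) 0 1 = 0 := by
    have := congrFun (congrFun e2 1 ) 1
    simpa [Matrix.mul_apply, Fin.sum_univ_two] using this
  have cdiag : (A : M2) 1 1 = (A : M2) 0 0 := by
    have := congrFun (congrFun e1 0) 1
    simpa [Matrix.mul_apply, Fin.sum_univ_two, c01] using this
  refine ⟨(A : M2) 0 0, ?_⟩
  ext i j
  fin_cases i <;> fin_cases j <;> simp [Matrix.one_apply, c10, c01, cdiag]

theorem ch2 (Y : M2) : Y * Y = (Matrix.trace Y) • Y - (Matrix.det Y) • 1 := by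
  ext i j
  fin_cases i <;> fin_cases j <;>
    simp [Matrix.mul_apply, Fin.sum_univ_two, Matrix.trace_fin_two, Matrix.det_fin_two,
      Matrix.one_apply] <;> ring

theorem pow_lin (t d : F) (k : ℕ) :
    ∃ a b : F, ∀ Y : M2, Y * Y = t • Y - d • 1 → Y ^ k = a • Y + b • 1 := by
  induction k with
  | zero => exact ⟨0, 1, fun Y _ => by simp⟩
  | succ n ih =>
    obtain ⟨a, b, hab⟩ := ih
    refine ⟨a * t + b, -(a * d), fun Y hY => ?_⟩
    rw [pow_succ, hab Y hY, add_mul, smul_mul_assoc, hY, smul_mul_assoc, one_mul]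
    rw [smul_sub, smul_smul, smul_smul]
    module

theorem mk_pow_eq_one_iff (A : GL (Fin 2) F) (k : ℕ) :
    (QuotientGroup.mk' (Subgroup.center (GL (Fin 2) F)) A) ^ k = 1 ↔
      ∃ a : F, ((A : M2)) ^ k = a • 1 := by
  rw [← map_pow, QuotientGroup.mk'_apply, QuotientGroup.eq_one_iff]
  constructor
  · intro h
    obtain ⟨a, ha⟩ := center_is_scalar _ h
    exact ⟨a, by rw [← Units.val_pow_eq_pow_val, ha]⟩
  · intro ⟨a, ha⟩
    exact scalar_mem_center _ a (by rw [Units.val_pow_eq_pow_val, ha])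

theorem exists_sq [Fintype F] (h2 : ringChar F = 2) (e : F) : ∃ a : F, a ^ 2 = e := by
  haveI : CharP F 2 := h2 ▸ ringChar.charP F
  have hinj : Function.Injective (fun a : F => a ^ 2) := by
    intro a b hab
    simp only [] at hab
    rcases mul_eq_zero.mp (show (a - b) * (a + b) = 0 by ring_nf; rw [hab]; ring) with h | h
    · linear_combination h
    · have : a = -b := by linear_combination h
      rw [this, CharTwo.neg_eq]
  obtain ⟨a, ha⟩ := (Finite.injective_iff_surjective.mp hinj) e
  exact ⟨a, ha⟩

theorem exists_sum_sq [Fintype F] (D e : F) (hD : D ≠ 0) : ∃ a b : F, a ^ 2 + D * b ^ 2 = e := by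
  by_cases h2 : ringChar F = 2
  · obtain ⟨a, ha⟩ := exists_sq h2 e
    exact ⟨a, 0, by rw [ha]; ring⟩
  · have hcard := FiniteField.odd_card_of_char_ne_two h2
    obtain ⟨a, b, hab⟩ := FiniteField.exists_root_sum_quadratic
      (f := Polynomial.X ^ 2 + Polynomial.C (-e)) (g := Polynomial.C D * Polynomial.X ^ 2)
      (Polynomial.degree_X_pow_add_C (by norm_num) (-e))
      (by simpa using Polynomial.degree_C_mul_X_pow 2 hD) hcard
    refine ⟨a, b, ?_⟩
    simp only [Polynomial.eval_add, Polynomial.eval_pow, Polynomial.eval_X, Polynomial.eval_C,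
      Polynomial.eval_mul] at hab
    linear_combination hab

theorem exists_quad [Fintype F] (D τ : F) (hD : D ≠ 0) :
    ∃ a b : F, a ^ 2 + D * b ^ 2 + (D * τ) * b + D = 0 := by
  by_cases h2 : ringChar F = 2
  · haveI : CharP F 2 := h2 ▸ ringChar.charP F
    obtain ⟨a, ha⟩ := exists_sq h2 D
    refine ⟨a, 0, ?_⟩
    rw [show (0:F)^2 = 0 by ring]
    ring_nf
    rw [ha]
    exact CharTwo.add_self_eq_zero D
  · have hcard := FiniteField.odd_card_of_char_ne_two h2
    obtain ⟨a, b, hab⟩ := FiniteField.exists_root_sum_quadratic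
      (f := Polynomial.X ^ 2)
      (g := Polynomial.C D * Polynomial.X ^ 2 + Polynomial.C (D * τ) * Polynomial.X
        + Polynomial.C D)
      (Polynomial.degree_X_pow 2) (Polynomial.degree_quadratic hD) hcard
    refine ⟨a, b, ?_⟩
    simp only [Polynomial.eval_add, Polynomial.eval_pow, Polynomial.eval_X, Polynomial.eval_C,
      Polynomial.eval_mul] at hab
    linear_combination hab

/-- companion matrix of `λ^2 + D` -/
def Cmat (D : F) : M2 := !![0, -D; 1, 0]

theorem companion_conj (X : M2) (h0 : Matrix.trace X = 0) (hns : ∀ a : F, X ≠ a • 1) :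
    ∃ h : M2, IsUnit h.det ∧ X * h = h * Cmat (Matrix.det X) := by
  have h11 : X 1 1 = - X 0 0 := by
    have h := h0
    simp [Matrix.trace_fin_two] at h
    linear_combination h
  by_cases hγ : X 1 0 ≠ 0
  · refine ⟨!![1, X 0 0; 0, X 1 0], by simp [Matrix.det_fin_two_of, hγ], ?_⟩
    ext i j
    fin_cases i <;> fin_cases j <;>
      simp [Cmat, Matrix.mul_apply, Fin.sum_univ_two, Matrix.det_fin_two, h11] <;> ring
  push_neg at hγ
  by_cases hβ : X 0 1 ≠ 0
  · refine ⟨!![0, X 0 1; 1, - X 0 0], by simp [Matrix.det_fin_two_of, hβ], ?_⟩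
    ext i j
    fin_cases i <;> fin_cases j <;>
      simp [Cmat, Matrix.mul_apply, Fin.sum_univ_two, Matrix.det_fin_two, h11, hγ] <;> ring
  push_neg at hβ
  have h2a : X 0 0 + X 0 0 ≠ 0 := by
    intro hc
    apply hns (X 0 0)
    ext i j
    fin_cases i <;> fin_cases j <;> simp [Matrix.one_apply, hγ, hβ, h11] <;> linear_combination -hc
  refine ⟨!![1, X 0 0; 1, - X 0 0], by simp [Matrix.det_fin_two_of]; intro hc; exact h2a (by linear_combination -hc), ?_⟩
  ext i j
  fin_cases i <;> fin_cases j <;>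
    simp [Cmat, Matrix.mul_apply, Fin.sum_univ_two, Matrix.det_fin_two, h11, hγ, hβ] <;> ring

theorem smul_one_comm (a : F) (Y : M2) : (a • (1:M2)) * Y = Y * (a • (1:M2)) := by
  rw [Matrix.smul_mul, Matrix.mul_smul, one_mul, mul_one]

theorem conj_by_SL [Fintype F] (X W : M2) (h0X : Matrix.trace X = 0) (h0W : Matrix.trace W = 0)
    (hdet : Matrix.det W = Matrix.det X) (hD : Matrix.det X ≠ 0)
    (hnsX : ∀ a : F, X ≠ a • 1) (hnsW : ∀ a : F, W ≠ a • 1) :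
    ∃ S : Matrix.SpecialLinearGroup (Fin 2) F, (S : M2) * W = X * (S : M2) := by
  obtain ⟨hx, hxu, hhx⟩ := companion_conj X h0X hnsX
  obtain ⟨hw, hwu, hhw⟩ := companion_conj W h0W hnsW
  rw [hdet] at hhw
  -- W = hw C hw⁻¹, X = hx C hx⁻¹, T := hx * hw⁻¹, W = T⁻¹ X T
  have hwinv : hw⁻¹ * hw = 1 := Matrix.nonsing_inv_mul hw hwu
  have hwinv' : hw * hw⁻¹ = 1 := Matrix.mul_nonsing_inv hw hwu
  have hxinv : hx⁻¹ * hx = 1 := Matrix.nonsing_inv_mul hx hxu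
  have hxinv' : hx * hx⁻¹ = 1 := Matrix.mul_nonsing_inv hx hxu
  set T := hx * hw⁻¹ with hT
  have h1 : hw⁻¹ * W = Cmat X.det * hw⁻¹ := by
    have h := congrArg (fun Y => hw⁻¹ * Y * hw⁻¹) hhw
    simp only [← mul_assoc] at h
    rw [mul_assoc (hw⁻¹ * W), hwinv', mul_one, hwinv, one_mul] at h
    exact h
  have hTX : X * T = T * W := by
    rw [hT, ← mul_assoc, hhx, mul_assoc, ← h1, ← mul_assoc]
  have hdetT : IsUnit T.det := by
    rw [hT, Matrix.det_mul]
    exact hxu.mul (Matrix.isUnit_nonsing_inv_det hw hwu)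
  set e := T.det with he
  have hene : e ≠ 0 := hdetT.ne_zero
  obtain ⟨a, b, hab⟩ := exists_sum_sq (Matrix.det X) e⁻¹ hD
  set Mm : M2 := a • 1 + b • X with hMm
  have hdetM : Matrix.det Mm = a ^ 2 + Matrix.det X * b ^ 2 := by
    have htr : X 0 0 + X 1 1 = 0 := by
      have h := h0X; simpa [Matrix.trace_fin_two] using h
    have hdd : Matrix.det X = X 0 0 * X 1 1 - X 0 1 * X 1 0 := Matrix.det_fin_two X
    rw [hMm, Matrix.det_fin_two]
    simp only [Matrix.add_apply, Matrix.smul_apply, Matrix.one_apply, smul_eq_mul]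
    simp only [Fin.zero_eta, Fin.mk_one, if_true, if_neg (by decide : ¬(0 : Fin 2) = 1),
      if_neg (by decide : ¬(1 : Fin 2) = 0), eq_self_iff_true]
    rw [hdd]
    linear_combination a * b * htr
  have hcomm : X * Mm = Mm * X := by
    rw [hMm]
    simp [mul_add, add_mul, Matrix.mul_smul, Matrix.smul_mul, mul_one, one_mul]
  set S := Mm * T with hS
  have hdetS : Matrix.det S = 1 := by
    rw [hS, Matrix.det_mul, hdetM, hab, ← he, inv_mul_cancel₀ hene]
  have hSW : S * W = X * S := by
    calc S * W = Mm * (X * T) := by rw [hS, mul_assoc, ← hTX]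
    _ = (X * Mm) * T := by rw [hcomm, mul_assoc]
    _ = X * S := by rw [hS, mul_assoc]
  exact ⟨⟨S, hdetS⟩, hSW⟩

theorem trace_conj (h N : M2) (hu : IsUnit h.det) :
    Matrix.trace (h * N * h⁻¹) = Matrix.trace N := by
  rw [mul_assoc, Matrix.trace_mul_comm, mul_assoc N, Matrix.nonsing_inv_mul h hu, mul_one]

theorem exists_W [Fintype F] (X : M2) (h0 : Matrix.trace X = 0) (hns : ∀ a : F, X ≠ a • 1)
    (hD : Matrix.det X ≠ 0) (τ : F) :
    ∃ W : M2, Matrix.trace W = 0 ∧ Matrix.det W = Matrix.det X ∧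
      Matrix.trace (X * W) = Matrix.det X * τ := by
  obtain ⟨h, hu, hh⟩ := companion_conj X h0 hns
  set D := Matrix.det X with hDdef
  obtain ⟨a, b, hab⟩ := exists_quad D τ hD
  set Wc : M2 := !![a, D * τ + D * b; b, -a] with hWc
  have htrWc : Matrix.trace Wc = 0 := by simp [hWc, Matrix.trace_fin_two]
  have hdetWc : Matrix.det Wc = D := by
    rw [hWc, Matrix.det_fin_two_of]
    linear_combination -hab
  have htrCWc : Matrix.trace (Cmat D * Wc) = D * τ := by
    simp [hWc, Cmat, Matrix.trace_fin_two, Matrix.mul_apply, Fin.sum_univ_two]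
  refine ⟨h * Wc * h⁻¹, ?_, ?_, ?_⟩
  · rw [trace_conj h Wc hu, htrWc]
  · rw [Matrix.det_mul, Matrix.det_mul, Matrix.det_nonsing_inv, mul_comm,
      ← mul_assoc, Ring.inverse_mul_cancel _ hu, one_mul, hdetWc]
  · have : X * (h * Wc * h⁻¹) = h * (Cmat D * Wc) * h⁻¹ := by
      rw [← mul_assoc, ← mul_assoc, hh, mul_assoc h (Cmat D) Wc]
    rw [this, trace_conj _ _ hu, htrCWc]

theorem key_step [Fintype F] {q r : ℕ} (hF : Fintype.card F = q) (hr : r.Prime)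
    (hrodd : Odd r) (hrL : r ∣ Nat.card (PSLinPGL 2 F)) (hrq : ¬ r ∣ q)
    (x : PGL 2 F) (hx : orderOf x = 2) :
    ∃ g₂ : PGL 2 F, g₂ ∈ PSLinPGL 2 F ∧ orderOf (x * (g₂⁻¹ * x * g₂)) = r := by
  haveI : Fact r.Prime := ⟨hr⟩
  haveI : Finite (PGL 2 F) := Quotient.finite _
  haveI : Fintype ↥(PSLinPGL 2 F) := Fintype.ofFinite _
  obtain ⟨z₀, hz₀⟩ := exists_prime_orderOf_dvd_card (G := ↥(PSLinPGL 2 F)) r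
    (by rw [← Nat.card_eq_fintype_card]; exact hrL)
  have hzord : orderOf (z₀ : PGL 2 F) = r := by
    have := orderOf_injective (PSLinPGL 2 F).subtype Subtype.coe_injective z₀
    simp only [Subgroup.coe_subtype] at this
    rw [this, hz₀]
  obtain ⟨w, hw1, hw2⟩ := Subgroup.mem_map.mp z₀.2
  obtain ⟨Z', rfl⟩ := MonoidHom.mem_range.mp hw1
  set Z : M2 := (Z' : M2) with hZdef
  have hdetZ : Matrix.det Z = 1 := Z'.2
  have hzr : ((z₀ : PGL 2 F)) ^ r = 1 := by rw [← hzord]; exact pow_orderOf_eq_one _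
  have hz1 : (z₀ : PGL 2 F) ≠ 1 := by
    intro h
    rw [h, orderOf_one] at hzord
    exact hr.one_lt.ne' hzord.symm
  obtain ⟨σ, hσ⟩ : ∃ a : F, Z ^ r = a • 1 := by
    have := (mk_pow_eq_one_iff (F := F) (Matrix.SpecialLinearGroup.toGL Z') r).mp
      (by rw [hw2]; exact hzr)
    simpa using this
  have hZns : ∀ a : F, Z ≠ a • 1 := by
    intro a ha
    apply hz1
    rw [← hw2]
    have := (mk_pow_eq_one_iff (F := F) (Matrix.SpecialLinearGroup.toGL Z') 1).mpr
      ⟨a, by simpa using ha⟩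
    simpa using this
  set τ : F := Matrix.trace Z with hτdef
  have hτ : τ ^ 2 ≠ 4 := by
    intro hτ4
    set p := ringChar F with hpdef
    haveI : CharP F p := ringChar.charP F
    obtain ⟨n, hp, hcard⟩ := FiniteField.card F p
    have hpq : p ∣ q := by
      rw [← hF, hcard]
      exact dvd_pow_self p (by positivity)
    by_cases hp2 : (2 : F) = 0
    · have h4 : (4 : F) = 0 := by
        have : (4 : F) = 2 * 2 := by norm_num
        rw [this, hp2, mul_zero]
      have hτ0 : τ = 0 := by
        have : τ ^ 2 = 0 := by rw [hτ4, h4]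
        exact pow_eq_zero_iff (n := 2) (by norm_num) |>.mp this
      have hZ2 : Z ^ 2 = (-1 : F) • 1 := by
        rw [pow_two, ch2 Z, ← hτdef, hτ0, hdetZ, zero_smul, zero_sub]
        rw [show ((-1 : F) • (1 : M2)) = -((1:F) • (1 : M2)) by rw [neg_smul]]
      have : ((z₀ : PGL 2 F)) ^ 2 = 1 := by
        rw [← hw2]
        exact (mk_pow_eq_one_iff (F := F) _ 2).mpr ⟨-1, by simpa using hZ2⟩
      have hdvd : r ∣ 2 := by rw [← hzord]; exact orderOf_dvd_of_pow_eq_one this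
      have : r = 2 := (Nat.prime_dvd_prime_iff_eq hr Nat.prime_two).mp hdvd
      rw [this] at hrodd
      simpa [Nat.odd_iff] using hrodd
    · -- characteristic ≠ 2 : τ = ± 2
      have hcases : τ = 2 ∨ τ = -2 := by
        have : (τ - 2) * (τ + 2) = 0 := by linear_combination hτ4
        rcases mul_eq_zero.mp this with h | h
        · left; linear_combination h
        · right; linear_combination h
      obtain ⟨ε, hε1, hε2⟩ : ∃ ε : F, τ = 2 * ε ∧ ε ^ 2 = 1 := by
        rcases hcases with h | h
        · exact ⟨1, by rw [h]; ring, by ring⟩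
        · exact ⟨-1, by rw [h]; ring, by ring⟩
      set N : M2 := Z - ε • 1 with hN
      have hNN : N * N = 0 := by
        have h2 : Z * Z = (2 * ε) • Z - (1 : F) • 1 := by
          rw [ch2 Z, ← hτdef, hε1, hdetZ]
        rw [hN, sub_mul, mul_sub, mul_sub, h2]
        simp only [mul_one, one_mul, Matrix.mul_smul, Matrix.smul_mul, smul_smul]
        rw [show ε * ε = (1 : F) by linear_combination hε2]
        module
      haveI : CharP M2 p := by infer_instance
      haveI : Fact p.Prime := ⟨hp⟩
      have hcom : Commute ((ε : F) • (1 : M2)) N := by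
        unfold Commute SemiconjBy
        exact smul_one_comm ε N
      have hZp : Z ^ p = (ε ^ p) • 1 := by
        have hzn : Z = ε • (1 : M2) + N := by rw [hN]; abel
        have hNp : N ^ p = 0 := by
          have h2p : 2 ≤ p := hp.two_le
          calc N ^ p = N ^ 2 * N ^ (p - 2) := by rw [← pow_add]; congr 1; omega
          _ = 0 := by rw [pow_two, hNN, zero_mul]
        rw [hzn, add_pow_char_of_commute p hcom, hNp, add_zero, smul_pow, one_pow]
      have : ((z₀ : PGL 2 F)) ^ p = 1 := by
        rw [← hw2]
        exact (mk_pow_eq_one_iff (F := F) _ p).mpr ⟨ε ^ p, by simpa using hZp⟩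
      have hdvd : r ∣ p := by rw [← hzord]; exact orderOf_dvd_of_pow_eq_one this
      have : r = p := (Nat.prime_dvd_prime_iff_eq hr hp).mp hdvd
      exact hrq (this ▸ hpq)
  -- lift x to a trace-zero matrix
  obtain ⟨A, hA⟩ := QuotientGroup.mk'_surjective (Subgroup.center (GL (Fin 2) F)) x
  set X : M2 := (A : M2) with hXdef
  have hx1 : x ≠ 1 := by intro h; rw [h, orderOf_one] at hx; norm_num at hx
  have hXns : ∀ a : F, X ≠ a • 1 := by
    intro a ha
    apply hx1
    rw [← hA]
    have := (mk_pow_eq_one_iff (F := F) A 1).mpr ⟨a, by simpa using ha⟩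
    simpa using this
  obtain ⟨lam, hlam⟩ : ∃ a : F, X ^ 2 = a • 1 := by
    have hx2 : x ^ 2 = 1 := by have := pow_orderOf_eq_one x; rwa [hx] at this
    exact (mk_pow_eq_one_iff (F := F) A 2).mp (by rw [hA]; exact hx2)
  have htr0 : Matrix.trace X = 0 := by
    by_contra htr
    apply hXns ((Matrix.trace X)⁻¹ * (lam + Matrix.det X))
    have h := ch2 X
    rw [← pow_two, hlam] at h
    have h2 : (Matrix.trace X) • X = (lam + Matrix.det X) • (1 : M2) := by
      rw [add_smul]
      exact sub_eq_iff_eq_add.mp h.symm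
    calc X = (Matrix.trace X)⁻¹ • ((Matrix.trace X) • X) := (inv_smul_smul₀ htr X).symm
    _ = _ := by rw [h2, smul_smul]
  have hD : Matrix.det X ≠ 0 :=
    ((Matrix.isUnit_iff_isUnit_det X).mp ⟨A, rfl⟩).ne_zero
  obtain ⟨W, htrW, hdetW, htrXW⟩ := exists_W X htr0 hXns hD τ
  have hWns : ∀ a : F, W ≠ a • 1 := by
    intro a ha
    have h1 : Matrix.det X * τ = 0 := by
      rw [← htrXW, ha, Matrix.mul_smul, mul_one, Matrix.trace_smul, htr0, smul_zero]
    have hτ0 : τ = 0 := by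
      rcases mul_eq_zero.mp h1 with h | h
      · exact absurd h hD
      · exact h
    have ha0 : a ≠ 0 := by
      intro h0
      rw [h0, zero_smul] at ha
      rw [ha, Matrix.det_zero] at hdetW
      exact hD hdetW.symm
    have h2 : a * 2 = 0 := by
      have h3 := htrW
      rw [ha, Matrix.trace_smul, Matrix.trace_one, smul_eq_mul] at h3
      simpa using h3
    have h20 : (2 : F) = 0 := by
      rcases mul_eq_zero.mp h2 with h | h
      · exact absurd h ha0
      · exact h
    apply hτ
    rw [hτ0, show (4 : F) = 2 * 2 by norm_num, h20, mul_zero]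
    ring
  obtain ⟨S', hS'⟩ := conj_by_SL X W htr0 htrW hdetW hD hXns hWns
  set Sm : M2 := (S' : M2) with hSmdef
  refine ⟨QuotientGroup.mk' _ (Matrix.SpecialLinearGroup.toGL S'), 
    Subgroup.mem_map.mpr ⟨_, MonoidHom.mem_range.mpr ⟨S', rfl⟩, rfl⟩, ?_⟩
  set G0 : GL (Fin 2) F :=
    A * ((Matrix.SpecialLinearGroup.toGL S')⁻¹ * A * Matrix.SpecialLinearGroup.toGL S') with hG0
  have hprod : x * ((QuotientGroup.mk' (Subgroup.center (GL (Fin 2) F))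
        (Matrix.SpecialLinearGroup.toGL S'))⁻¹ * x *
        QuotientGroup.mk' (Subgroup.center (GL (Fin 2) F))
        (Matrix.SpecialLinearGroup.toGL S')) =
      QuotientGroup.mk' (Subgroup.center (GL (Fin 2) F)) G0 := by
    rw [← hA, hG0]
    simp [_root_.map_mul]
  have hadj : Sm.adjugate * X * Sm = W := by
    rw [mul_assoc, ← hS', ← mul_assoc, Matrix.adjugate_mul]
    rw [show Sm.det = 1 from S'.2, one_smul, one_mul]
  have hval : ((G0 : GL (Fin 2) F) : M2) = X * W := by
    rw [hG0]
    have hinv : ((Matrix.SpecialLinearGroup.toGL S')⁻¹ : GL (Fin 2) F) =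
        Matrix.SpecialLinearGroup.toGL S'⁻¹ := (map_inv _ _).symm
    rw [Units.val_mul, hinv]
    simp only [Units.val_mul, toGL_val, Matrix.SpecialLinearGroup.coe_inv]
    rw [← hadj, ← hXdef, ← hSmdef]
  set P : M2 := X * W with hP
  have hPtr : Matrix.trace P = Matrix.det X * τ := htrXW
  have hPdet : Matrix.det P = Matrix.det X ^ 2 := by
    rw [hP, Matrix.det_mul, hdetW]; ring
  have hPns : ∀ a : F, P ≠ a • 1 := by
    intro a ha
    have e1 : Matrix.det X * τ = a * 2 := by
      rw [← hPtr, ha, Matrix.trace_smul, Matrix.trace_one, smul_eq_mul]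
      norm_num
    have e2 : a ^ 2 = Matrix.det X ^ 2 := by
      rw [← hPdet, ha]
      simp [Matrix.det_smul]
    apply hτ
    have h4 : Matrix.det X ^ 2 * τ ^ 2 = Matrix.det X ^ 2 * 4 := by
      linear_combination (Matrix.det X * τ + a * 2) * e1 + 4 * e2
    exact mul_left_cancel₀ (pow_ne_zero 2 hD) h4
  set Q : M2 := Matrix.det X • Z with hQ
  have hQtr : Matrix.trace Q = Matrix.det X * τ := by
    rw [hQ, Matrix.trace_smul, ← hτdef, smul_eq_mul]
  have hQdet : Matrix.det Q = Matrix.det X ^ 2 := by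
    rw [hQ, Matrix.det_smul, hdetZ, mul_one, Fintype.card_fin]
  have hQns : ∀ a : F, Q ≠ a • 1 := by
    intro a ha
    apply hZns ((Matrix.det X)⁻¹ * a)
    calc Z = (Matrix.det X)⁻¹ • Q := by rw [hQ, inv_smul_smul₀ hD]
    _ = _ := by rw [ha, smul_smul]
  obtain ⟨aa, bb, hab⟩ := pow_lin (Matrix.det X * τ) (Matrix.det X ^ 2) r
  have hPc : P * P = (Matrix.det X * τ) • P - (Matrix.det X ^ 2) • 1 := by
    rw [ch2 P, hPtr, hPdet]
  have hQc : Q * Q = (Matrix.det X * τ) • Q - (Matrix.det X ^ 2) • 1 := by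
    rw [ch2 Q, hQtr, hQdet]
  have hQr : Q ^ r = (Matrix.det X ^ r * σ) • 1 := by
    rw [hQ, smul_pow, hσ, smul_smul]
  have haa : aa = 0 := by
    by_contra hne
    apply hQns (aa⁻¹ * (Matrix.det X ^ r * σ - bb))
    have e := hab Q hQc
    rw [hQr] at e
    have h5 : aa • Q = (Matrix.det X ^ r * σ - bb) • (1 : M2) := by
      rw [sub_smul]
      exact eq_sub_of_add_eq e.symm
    calc Q = aa⁻¹ • (aa • Q) := (inv_smul_smul₀ hne Q).symm
    _ = _ := by rw [h5, smul_smul]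
  have hPr : P ^ r = bb • 1 := by rw [hab P hPc, haa, zero_smul, zero_add]
  rw [hprod]
  apply orderOf_eq_prime
  · exact (mk_pow_eq_one_iff G0 r).mpr ⟨bb, by rw [hval, hPr]⟩
  · intro h1
    obtain ⟨a, ha⟩ := (mk_pow_eq_one_iff G0 1).mp (by rw [pow_one]; exact h1)
    rw [pow_one, hval] at ha
    exact hPns a ha

end Aux

theorem statement_5 (q : ℕ) (hq : IsPrimePow q) (hq4 : 4 ≤ q)
    (F : Type) [Field F] [Fintype F] (hF : Fintype.card F = q)
    (r : ℕ) (hr : r.Prime) (hrodd : Odd r)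
    (hrL : r ∣ Nat.card (PSLinPGL 2 F)) (hrq : ¬ r ∣ q)
    (x : PGL 2 F) (hx : orderOf x = 2) :
    IsLeast {m : ℕ | ∃ g : Fin m → PGL 2 F, (∀ i, g i ∈ PSLinPGL 2 F) ∧
        r ∣ Nat.card (Subgroup.closure (Set.range fun i => (g i)⁻¹ * x * g i)
          : Subgroup (PGL 2 F))} 2 ∧
    ∃ g₁ g₂ : PGL 2 F, g₁ ∈ PSLinPGL 2 F ∧ g₂ ∈ PSLinPGL 2 F ∧
      r ∣ Nat.card (Subgroup.closure {g₁⁻¹ * x * g₁, g₂⁻¹ * x * g₂} : Subgroup (PGL 2 F)) := by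
  haveI : Fact r.Prime := ⟨hr⟩
  haveI : Finite (PGL 2 F) := Quotient.finite _
  obtain ⟨g₂, hg₂, hord⟩ := key_step hF hr hrodd hrL hrq x hx
  have hone : (1 : PGL 2 F)⁻¹ * x * 1 = x := by group
  have hmain : r ∣ Nat.card
      (Subgroup.closure {(1 : PGL 2 F)⁻¹ * x * 1, g₂⁻¹ * x * g₂} : Subgroup (PGL 2 F)) := by
    rw [hone]
    have hmem : x * (g₂⁻¹ * x * g₂) ∈ Subgroup.closure {x, g₂⁻¹ * x * g₂} :=
      mul_mem (Subgroup.subset_closure (by simp)) (Subgroup.subset_closure (by simp))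
    rw [← hord]
    exact Subgroup.orderOf_dvd_natCard _ hmem
  constructor
  · constructor
    · refine ⟨![1, g₂], ?_, ?_⟩
      · intro i
        fin_cases i
        · simpa using (PSLinPGL 2 F).one_mem
        · simpa using hg₂
      · have hset : (Set.range fun i => ((![1, g₂] : Fin 2 → PGL 2 F) i)⁻¹ * x *
              ((![1, g₂] : Fin 2 → PGL 2 F) i)) =
            {(1 : PGL 2 F)⁻¹ * x * 1, g₂⁻¹ * x * g₂} := by
          ext y
          simp [Fin.exists_fin_two, eq_comm]
        rw [hset]
        exact hmain
    · rintro m ⟨g, hgm, hdvd⟩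
      by_contra hlt
      push_neg at hlt
      interval_cases m
      · rw [Set.range_eq_empty, Subgroup.closure_empty, Subgroup.card_bot] at hdvd
        exact hr.one_lt.ne' (Nat.dvd_one.mp hdvd)
      · rw [Set.range_unique, ← Subgroup.zpowers_eq_closure, Nat.card_zpowers] at hdvd
        have hconj : orderOf ((g default)⁻¹ * x * g default) = orderOf x := by
          have h := orderOf_injective (MulEquiv.toMonoidHom (MulAut.conj (g default)⁻¹))
            (MulEquiv.injective _) x
          simpa [MulAut.conj_apply] using h
        rw [hconj, hx] at hdvd
        have : r = 2 := (Nat.prime_dvd_prime_iff_eq hr Nat.prime_two).mp hdvd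
        rw [this] at hrodd
        simpa [Nat.odd_iff] using hrodd
  · exact ⟨1, g₂, (PSLinPGL 2 F).one_mem, hg₂, hmain⟩
end

section
/- Let V be a finite-dimensional vector space over a finite field F_q, and suppose V = U ⊕ W with 2 ≤ dim U ≤ dim W. Let L_U ≤ GL(U) and L_W ≤ GL(W) be subgroups acting irreducibly on U and on W respectively, and let L = L_U × L_W be the corresponding subgroup of GL(V) (acting block-diagonally with respect to the decomposition V = U ⊕ W). Suppose x ∈ L is such that its projection to L_U acts irreducibly on U. Then there exists g ∈ SL(V) such that the subgroup G = ⟨L, g⁻¹xg⟩ acts irreducibly on V. -/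
/-- The special linear group `SL(V)` as the subgroup of `GL(V) = (V ≃ₗ[F] V)`
consisting of transformations of determinant `1`. -/
noncomputable def SLV (F V : Type) [Field F] [AddCommGroup V] [Module F V] :
    Subgroup (V ≃ₗ[F] V) :=
  MonoidHom.ker LinearEquiv.det

/-- A subgroup `G ≤ GL(V)` acts irreducibly on `V` if the only `G`-invariant subspaces
of `V` are `0` and `V`. -/
def ActsIrreducibly (F : Type) {V : Type} [Field F] [AddCommGroup V] [Module F V]
    (G : Subgroup (V ≃ₗ[F] V)) : Prop :=
  ∀ X : Submodule F V, (∀ g ∈ G, ∀ v ∈ X, g v ∈ X) → X = ⊥ ∨ X = ⊤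

/-- The block-diagonal embedding `GL(U) × GL(W) → GL(V)` associated with a direct sum
decomposition `V = U ⊕ W`. -/
noncomputable def blockMap (F : Type) {V : Type} [Field F] [AddCommGroup V] [Module F V]
    (U W : Submodule F V) (h : IsCompl U W) :
    ((↥U ≃ₗ[F] ↥U) × (↥W ≃ₗ[F] ↥W)) →* (V ≃ₗ[F] V) where
  toFun p := ((Submodule.prodEquivOfIsCompl U W h).symm.trans (p.1.prodCongr p.2)).trans
      (Submodule.prodEquivOfIsCompl U W h)
  map_one' := by
    ext v
    simp [LinearEquiv.trans_apply, Submodule.projection_add_projection_eq_self]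
  map_mul' := by
    intro p q
    ext v
    show (Submodule.prodEquivOfIsCompl U W h) _ =
      (((Submodule.prodEquivOfIsCompl U W h).symm.trans (p.1.prodCongr p.2)).trans
        (Submodule.prodEquivOfIsCompl U W h))
      ((((Submodule.prodEquivOfIsCompl U W h).symm.trans (q.1.prodCongr q.2)).trans
        (Submodule.prodEquivOfIsCompl U W h)) v)
    simp only [LinearEquiv.trans_apply, LinearEquiv.prodCongr_apply, LinearEquiv.symm_apply_apply]
    rfl

section Aux

variable {F V : Type} [Field F] [AddCommGroup V] [Module F V]

lemma det_one_add_aux [FiniteDimensional F V]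
    (f g : V →ₗ[F] F) (x y : V)
    (hfx : f x = 0) (hfy : f y = 0) (hgx : g x = 0) (hgy : g y = 0) :
    LinearMap.det ((1 : V →ₗ[F] V) +
      ((LinearMap.toSpanSingleton F V x) ∘ₗ f + (LinearMap.toSpanSingleton F V y) ∘ₗ g)) = 1 := by
  classical
  set pr : V →ₗ[F] (Fin 2 → F) := LinearMap.pi ![f, g] with hpr
  set ι : (Fin 2 → F) →ₗ[F] V :=
    (LinearMap.toSpanSingleton F V x) ∘ₗ (LinearMap.proj 0) +
    (LinearMap.toSpanSingleton F V y) ∘ₗ (LinearMap.proj 1) with hι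
  have hcomp : ι ∘ₗ pr =
      (LinearMap.toSpanSingleton F V x) ∘ₗ f + (LinearMap.toSpanSingleton F V y) ∘ₗ g := by
    ext v
    simp [hpr, hι, LinearMap.pi_apply, LinearMap.toSpanSingleton_apply]
  have hzero : pr ∘ₗ ι = 0 := by
    refine LinearMap.ext fun c => funext fun i => ?_
    fin_cases i <;>
      simp [hpr, hι, LinearMap.pi_apply, LinearMap.toSpanSingleton_apply, hfx, hfy, hgx, hgy]
  rw [← hcomp, ← LinearMap.det_toMatrix (Module.finBasis F V), map_add,
    LinearMap.toMatrix_comp _ (Pi.basisFun F (Fin 2)) _]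
  rw [show LinearMap.toMatrix (Module.finBasis F V) (Module.finBasis F V) 1 = 1 by
    rw [Module.End.one_eq_id, LinearMap.toMatrix_id]]
  rw [Matrix.det_one_add_mul_comm, ← LinearMap.toMatrix_comp, hzero, map_zero, add_zero,
    Matrix.det_one]

variable {U W : Submodule F V} (h : IsCompl U W)

lemma blockMap_apply_coe (c : ↥U ≃ₗ[F] ↥U) (d : ↥W ≃ₗ[F] ↥W) (u : U) (w : W) :
    blockMap F U W h (c, d) (↑u + ↑w) = ↑(c u) + ↑(d w) := by
  have hsymm : (Submodule.prodEquivOfIsCompl U W h).symm ((u : V) + (w : V)) = (u, w) := by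
    rw [LinearEquiv.symm_apply_eq]
    rfl
  show (Submodule.prodEquivOfIsCompl U W h)
      ((c.prodCongr d) ((Submodule.prodEquivOfIsCompl U W h).symm ((u : V) + (w : V)))) = _
  rw [hsymm]
  rfl

lemma blockMap_apply_left (c : ↥U ≃ₗ[F] ↥U) (d : ↥W ≃ₗ[F] ↥W) (u : U) :
    blockMap F U W h (c, d) ↑u = ↑(c u) := by
  simpa using blockMap_apply_coe h c d u 0

lemma blockMap_apply_right (c : ↥U ≃ₗ[F] ↥U) (d : ↥W ≃ₗ[F] ↥W) (w : W) :
    blockMap F U W h (c, d) ↑w = ↑(d w) := by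
  simpa using blockMap_apply_coe h c d 0 w

lemma blockMap_apply' (c : ↥U ≃ₗ[F] ↥U) (d : ↥W ≃ₗ[F] ↥W) (v : V) :
    blockMap F U W h (c, d) v =
      ↑(c (U.linearProjOfIsCompl W h v)) + ↑(d (W.linearProjOfIsCompl U h.symm v)) := by
  conv_lhs => rw [← (Submodule.projection_add_projection_eq_self h v :
    ((U.linearProjOfIsCompl W h v : V) + (W.linearProjOfIsCompl U h.symm v : V)) = v)]
  exact blockMap_apply_coe h c d _ _

end Aux

theorem statement_8 (F V : Type) [Field F] [Fintype F]
    [AddCommGroup V] [Module F V] [FiniteDimensional F V]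
    (U W : Submodule F V) (hUW : IsCompl U W)
    (hU2 : 2 ≤ Module.finrank F ↥U)
    (hUleW : Module.finrank F ↥U ≤ Module.finrank F ↥W)
    (LU : Subgroup (↥U ≃ₗ[F] ↥U)) (LW : Subgroup (↥W ≃ₗ[F] ↥W))
    (hLU : ActsIrreducibly F LU) (hLW : ActsIrreducibly F LW)
    -- `L = L_U × L_W` as a block-diagonal subgroup of `GL(V)`
    (L : Subgroup (V ≃ₗ[F] V)) (hL : L = Subgroup.map (blockMap F U W hUW) (LU.prod LW))
    -- `x ∈ L`, with projection `a` to `L_U` acting irreducibly on `U`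
    (x : V ≃ₗ[F] V) (a : ↥U ≃ₗ[F] ↥U) (b : ↥W ≃ₗ[F] ↥W)
    (ha : a ∈ LU) (hb : b ∈ LW) (hx : x = blockMap F U W hUW (a, b))
    (haIrr : ∀ X : Submodule F ↥U, (∀ v ∈ X, a v ∈ X) → X = ⊥ ∨ X = ⊤) :
    -- there is `g ∈ SL(V)` such that `G = ⟨L, g⁻¹xg⟩` acts irreducibly on `V`
    ∃ g : V ≃ₗ[F] V, g ∈ SLV F V ∧
      ActsIrreducibly F (L ⊔ Subgroup.closure {g⁻¹ * x * g}) := by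
  classical
  set πU := U.linearProjOfIsCompl W hUW with hπUdef
  set πW := W.linearProjOfIsCompl U hUW.symm with hπWdef
  have hW2 : 2 ≤ Module.finrank F ↥W := hU2.trans hUleW
  have hUnt : Nontrivial ↥U := Module.nontrivial_of_finrank_pos (R := F) (by omega)
  have hWnt : Nontrivial ↥W := Module.nontrivial_of_finrank_pos (R := F) (by omega)
  obtain ⟨u₀, hu₀⟩ := exists_ne (0 : ↥U)
  obtain ⟨w₀, hw₀⟩ := exists_ne (0 : ↥W)
  -- `a u₀` is not a multiple of `u₀`
  have hau₀ : a u₀ ∉ Submodule.span F {u₀} := by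
    intro hmem
    obtain ⟨c₀, hc₀⟩ := Submodule.mem_span_singleton.mp hmem
    have hinv : ∀ v ∈ Submodule.span F {u₀}, a v ∈ Submodule.span F {u₀} := by
      intro v hv
      obtain ⟨c, hc⟩ := Submodule.mem_span_singleton.mp hv
      rw [← hc, map_smul]
      rw [← hc₀]
      exact Submodule.smul_mem _ _ (Submodule.smul_mem _ _ (Submodule.mem_span_singleton_self _))
    rcases haIrr _ hinv with hbot | htop
    · have hm : u₀ ∈ (⊥ : Submodule F ↥U) := hbot ▸ Submodule.mem_span_singleton_self u₀
      exact hu₀ ((Submodule.mem_bot F).mp hm)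
    · have h1 : Module.finrank F ↥(⊤ : Submodule F ↥U) = 1 := by
        rw [← htop]; exact finrank_span_singleton hu₀
      rw [finrank_top] at h1
      omega
  -- the functional `φ` on `U`
  obtain ⟨φ₀, hφ₀ne, hφ₀map⟩ := Submodule.exists_dual_map_eq_bot_of_notMem hau₀ inferInstance
  set φ : Module.Dual F ↥U := (φ₀ (a u₀))⁻¹ • φ₀ with hφdef
  have hφa : φ (a u₀) = 1 := by
    simp only [hφdef, LinearMap.smul_apply, smul_eq_mul]
    exact inv_mul_cancel₀ hφ₀ne
  have hφu₀ : φ u₀ = 0 := by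
    have h0 : φ₀ u₀ = 0 := by
      have : φ₀ u₀ ∈ (Submodule.span F {u₀}).map φ₀ :=
        Submodule.mem_map_of_mem (Submodule.mem_span_singleton_self u₀)
      rwa [hφ₀map, Submodule.mem_bot] at this
    simp [hφdef, h0]
  -- a vector `w₁` outside the span of `w₀`, and the functional `ψ` on `W`
  have hspanW : Submodule.span F {w₀} ≠ ⊤ := by
    intro htop
    have h1 : Module.finrank F ↥(⊤ : Submodule F ↥W) = 1 := by
      rw [← htop]; exact finrank_span_singleton hw₀
    rw [finrank_top] at h1
    omega
  obtain ⟨w₁, hw₁⟩ : ∃ w₁ : ↥W, w₁ ∉ Submodule.span F {w₀} := by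
    by_contra hcon
    push_neg at hcon
    exact hspanW (Submodule.eq_top_iff'.mpr hcon)
  obtain ⟨ψ₀, hψ₀ne, hψ₀map⟩ := Submodule.exists_dual_map_eq_bot_of_notMem hw₁ inferInstance
  set ψ : Module.Dual F ↥W := (ψ₀ w₁)⁻¹ • ψ₀ with hψdef
  have hψw₁ : ψ w₁ = 1 := by
    simp only [hψdef, LinearMap.smul_apply, smul_eq_mul]
    exact inv_mul_cancel₀ hψ₀ne
  have hψw₀ : ψ w₀ = 0 := by
    have h0 : ψ₀ w₀ = 0 := by
      have : ψ₀ w₀ ∈ (Submodule.span F {w₀}).map ψ₀ :=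
        Submodule.mem_map_of_mem (Submodule.mem_span_singleton_self w₀)
      rwa [hψ₀map, Submodule.mem_bot] at this
    simp [hψdef, h0]
  -- the nilpotent map `n` and the unipotent `g = 1 + n`
  set n : V →ₗ[F] V := (LinearMap.toSpanSingleton F V ↑w₀) ∘ₗ (φ ∘ₗ πU)
      + (LinearMap.toSpanSingleton F V ↑u₀) ∘ₗ (ψ ∘ₗ πW) with hndef
  have napply : ∀ v : V, n v = φ (πU v) • (w₀ : V) + ψ (πW v) • (u₀ : V) := by
    intro v
    simp [hndef, LinearMap.toSpanSingleton_apply]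
  have hπUu : ∀ u : ↥U, πU ↑u = u := fun u => Submodule.linearProjOfIsCompl_apply_left hUW u
  have hπUw : ∀ w : ↥W, πU ↑w = 0 := fun w => Submodule.linearProjOfIsCompl_apply_right hUW w
  have hπWw : ∀ w : ↥W, πW ↑w = w := fun w =>
    Submodule.linearProjOfIsCompl_apply_left hUW.symm w
  have hπWu : ∀ u : ↥U, πW ↑u = 0 := fun u =>
    Submodule.linearProjOfIsCompl_apply_right' hUW.symm u.2
  have hnu₀ : n ↑u₀ = 0 := by rw [napply, hπUu, hπWu, hφu₀, map_zero]; simp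
  have hnw₀ : n ↑w₀ = 0 := by rw [napply, hπUw, hπWw, hψw₀, map_zero]; simp
  have hnn : ∀ v : V, n (n v) = 0 := by
    intro v
    rw [napply v, map_add, map_smul, map_smul, hnu₀, hnw₀]
    simp
  have hcomp1 : ((1 : V →ₗ[F] V) + n) ∘ₗ ((1 : V →ₗ[F] V) - n) = LinearMap.id := by
    ext v
    simp only [LinearMap.comp_apply, LinearMap.add_apply, LinearMap.sub_apply,
      Module.End.one_apply, map_sub, hnn v, LinearMap.id_apply]
    abel
  have hcomp2 : ((1 : V →ₗ[F] V) - n) ∘ₗ ((1 : V →ₗ[F] V) + n) = LinearMap.id := by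
    ext v
    simp only [LinearMap.comp_apply, LinearMap.add_apply, LinearMap.sub_apply,
      Module.End.one_apply, map_add, hnn v, LinearMap.id_apply]
    abel
  set g : V ≃ₗ[F] V := LinearEquiv.ofLinear ((1 : V →ₗ[F] V) + n) ((1 : V →ₗ[F] V) - n)
    hcomp1 hcomp2 with hgdef
  have hgapp : ∀ v : V, g v = v + n v := by
    intro v
    rw [hgdef, LinearEquiv.ofLinear_apply]
    simp
  have hginv : ∀ v : V, (g⁻¹ : V ≃ₗ[F] V) v = v - n v := by
    intro v
    show g.symm v = v - n v
    rw [hgdef, LinearEquiv.ofLinear_symm_apply]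
    simp
  -- `g ∈ SL(V)`
  have hgSL : g ∈ SLV F V := by
    have hdet1 : LinearMap.det (g : V →ₗ[F] V) = 1 := by
      have hco : (g : V →ₗ[F] V) = (1 : V →ₗ[F] V) + n := rfl
      rw [hco, hndef]
      refine det_one_add_aux _ _ _ _ ?_ ?_ ?_ ?_ <;>
        simp [LinearMap.comp_apply, hπUu, hπUw, hπWw, hπWu, hφu₀, hψw₀]
    show g ∈ MonoidHom.ker LinearEquiv.det
    rw [MonoidHom.mem_ker]
    apply Units.ext
    rw [LinearEquiv.coe_det]
    simpa using hdet1
  -- behaviour of `x`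
  have hxu : ∀ u : ↥U, x ↑u = ↑(a u) := fun u => by
    rw [hx]; exact blockMap_apply_left hUW a b u
  have hxw : ∀ w : ↥W, x ↑w = ↑(b w) := fun w => by
    rw [hx]; exact blockMap_apply_right hUW a b w
  -- the conjugated element `y = g⁻¹ x g`
  set y := g⁻¹ * x * g with hydef
  have hyapp : ∀ v : V, y v = (g⁻¹ : V ≃ₗ[F] V) (x (g v)) := fun v => rfl
  have hyu₀ : y ↑u₀ = ↑(a u₀) - ↑w₀ := by
    rw [hyapp, hgapp, hnu₀, add_zero, hxu, hginv, napply, hπUu, hπWu, hφa, map_zero]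
    simp
  have hyw₁ : y ↑w₁ = ↑(b w₁) + ↑(a u₀) - ((w₀ : V) + ψ (b w₁) • (u₀ : V)) := by
    have hg1 : g ↑w₁ = (w₁ : V) + (u₀ : V) := by
      rw [hgapp, napply, hπUw, hπWw, map_zero, hψw₁]
      simp
    rw [hyapp, hg1, map_add, hxw, hxu, hginv, map_add, napply, napply, hπUu, hπUw, hπWw, hπWu,
      hφa, map_zero, map_zero]
    simp
    abel
  refine ⟨g, hgSL, ?_⟩
  intro X hXinv
  have hyX : ∀ v ∈ X, y v ∈ X := fun v hv =>
    hXinv y (Subgroup.mem_sup_right (Subgroup.subset_closure (Set.mem_singleton _))) v hv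
  have hblockX : ∀ c ∈ LU, ∀ d ∈ LW, ∀ v ∈ X, blockMap F U W hUW (c, d) v ∈ X := by
    intro c hc d hd v hv
    refine hXinv _ (Subgroup.mem_sup_left ?_) v hv
    rw [hL]
    exact Subgroup.mem_map.mpr ⟨(c, d), Subgroup.mem_prod.mpr ⟨hc, hd⟩, rfl⟩
  set XU : Submodule F ↥U := X.comap U.subtype with hXUdef
  set XW : Submodule F ↥W := X.comap W.subtype with hXWdef
  have hXUmem : ∀ u : ↥U, u ∈ XU ↔ (u : V) ∈ X := fun u => Iff.rfl
  have hXWmem : ∀ w : ↥W, w ∈ XW ↔ (w : V) ∈ X := fun w => Iff.rfl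
  have hXUinv : XU = ⊥ ∨ XU = ⊤ := by
    apply hLU
    intro c hc u hu
    rw [hXUmem] at hu ⊢
    have h1 : blockMap F U W hUW (c, (1 : ↥W ≃ₗ[F] ↥W)) ↑u ∈ X := hblockX c hc 1 (one_mem _) _ hu
    rwa [blockMap_apply_left] at h1
  have hXWinv : XW = ⊥ ∨ XW = ⊤ := by
    apply hLW
    intro d hd w hw
    rw [hXWmem] at hw ⊢
    have h1 : blockMap F U W hUW ((1 : ↥U ≃ₗ[F] ↥U), d) ↑w ∈ X := hblockX 1 (one_mem _) d hd _ hw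
    rwa [blockMap_apply_right] at h1
  rcases hXUinv with hXUbot | hXUtop
  · rcases hXWinv with hXWbot | hXWtop
    · -- both intersections trivial : `X = ⊥`
      left
      -- the fixed subspace of `L_W` is trivial
      have hfix : ∀ w : ↥W, (∀ d ∈ LW, d w = w) → w = 0 := by
        set Fix : Submodule F ↥W :=
          ⨅ d : LW, LinearMap.ker (((d : ↥W ≃ₗ[F] ↥W) : ↥W →ₗ[F] ↥W) - LinearMap.id) with hFixdef
        have hmemFix : ∀ w : ↥W, w ∈ Fix ↔ ∀ d ∈ LW, d w = w := by
          intro w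
          rw [hFixdef, Submodule.mem_iInf]
          constructor
          · intro hall d hd
            have := hall ⟨d, hd⟩
            rw [LinearMap.mem_ker, LinearMap.sub_apply, LinearMap.id_apply, sub_eq_zero] at this
            exact this
          · intro hall d
            rw [LinearMap.mem_ker, LinearMap.sub_apply, LinearMap.id_apply, sub_eq_zero]
            exact hall d d.2
        have hFixcase : Fix = ⊥ ∨ Fix = ⊤ := by
          apply hLW
          intro d hd w hw
          rw [hmemFix] at hw ⊢
          intro d' hd'
          rw [hw d hd]
          exact hw d' hd'
        rcases hFixcase with hbot | htop
        · intro w hw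
          have : w ∈ Fix := (hmemFix w).mpr hw
          rwa [hbot, Submodule.mem_bot] at this
        · exfalso
          have hall : ∀ d ∈ LW, ∀ w : ↥W, d w = w := by
            intro d hd w
            exact ((hmemFix w).mp (htop ▸ Submodule.mem_top)) d hd
          rcases hLW (Submodule.span F {w₀})
              (by intro d hd v hv; rw [hall d hd v]; exact hv) with h1 | h2
          · have hm : w₀ ∈ (⊥ : Submodule F ↥W) := h1 ▸ Submodule.mem_span_singleton_self w₀
            exact hw₀ ((Submodule.mem_bot F).mp hm)
          · exact hw₁ (h2 ▸ Submodule.mem_top)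
      rw [Submodule.eq_bot_iff]
      intro v hv
      have hwfix : ∀ d ∈ LW, d (πW v) = πW v := by
        intro d hd
        have h1 : blockMap F U W hUW ((1 : ↥U ≃ₗ[F] ↥U), d) v ∈ X := hblockX 1 (one_mem _) d hd v hv
        rw [blockMap_apply' hUW] at h1
        rw [show (1 : ↥U ≃ₗ[F] ↥U) (U.linearProjOfIsCompl W hUW v) =
          U.linearProjOfIsCompl W hUW v from rfl] at h1
        have h2 : ((d (πW v) : V) - (πW v : V)) ∈ X := by
          have hdec : ((πU v : V)) + ↑(πW v) = v :=
            Submodule.projection_add_projection_eq_self hUW v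
          have hvX : ((πU v : V) + ↑(πW v)) ∈ X := by rw [hdec]; exact hv
          have h3 := X.sub_mem h1 hvX
          have h4 : ((πU v : V) + ↑(d (πW v))) - ((πU v : V) + ↑(πW v))
              = ((d (πW v) : V) - (πW v : V)) := by abel
          rwa [h4] at h3
        have h5 : d (πW v) - πW v ∈ XW := by
          rw [hXWmem]
          push_cast
          exact h2
        rw [hXWbot, Submodule.mem_bot, sub_eq_zero] at h5
        exact h5
      have hπWv : πW v = 0 := hfix _ hwfix
      have hvU : v = ↑(πU v) := by
        conv_lhs => rw [← (show ((πU v : V) + ↑(πW v)) = v from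
          Submodule.projection_add_projection_eq_self hUW v)]
        rw [hπWv]
        simp
      have h6 : πU v ∈ XU := by
        rw [hXUmem, ← hvU]
        exact hv
      rw [hXUbot, Submodule.mem_bot] at h6
      rw [hvU, h6]
      simp
    · -- `X ∩ U = 0`, `W ≤ X` : contradiction via `y w₁`
      exfalso
      have hWX : ∀ w : ↥W, (w : V) ∈ X := fun w => by
        rw [← hXWmem]
        rw [hXWtop]
        trivial
      have h1 : y ↑w₁ ∈ X := hyX _ (hWX w₁)
      rw [hyw₁] at h1
      have h2 : ((a u₀ : V) - ψ (b w₁) • (u₀ : V)) ∈ X := by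
        have h3 := X.sub_mem (X.add_mem h1 (hWX w₀)) (hWX (b w₁))
        have h4 : ((b w₁ : V) + ↑(a u₀) - ((w₀ : V) + ψ (b w₁) • (u₀ : V)) + ↑w₀) - ↑(b w₁)
            = (a u₀ : V) - ψ (b w₁) • (u₀ : V) := by abel
        rwa [h4] at h3
      have h5 : a u₀ - ψ (b w₁) • u₀ ∈ XU := by
        rw [hXUmem]
        push_cast
        exact h2
      rw [hXUbot, Submodule.mem_bot, sub_eq_zero] at h5
      exact hau₀ (h5 ▸ Submodule.smul_mem _ _ (Submodule.mem_span_singleton_self u₀))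
  · -- `U ≤ X`
    have hUX : ∀ u : ↥U, (u : V) ∈ X := fun u => by
      rw [← hXUmem, hXUtop]
      trivial
    rcases hXWinv with hXWbot | hXWtop
    · -- `U ≤ X`, `X ∩ W = 0` : contradiction via `y u₀`
      exfalso
      have h1 : y ↑u₀ ∈ X := hyX _ (hUX u₀)
      rw [hyu₀] at h1
      have h2 : (w₀ : V) ∈ X := by
        have h3 := X.sub_mem (hUX (a u₀)) h1
        have h4 : (a u₀ : V) - ((a u₀ : V) - ↑w₀) = (w₀ : V) := by abel
        rwa [h4] at h3
      have h5 : w₀ ∈ XW := by rw [hXWmem]; exact h2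
      rw [hXWbot, Submodule.mem_bot] at h5
      exact hw₀ h5
    · -- `U ≤ X`, `W ≤ X` : `X = ⊤`
      right
      have hWX : ∀ w : ↥W, (w : V) ∈ X := fun w => by
        rw [← hXWmem, hXWtop]
        trivial
      rw [Submodule.eq_top_iff']
      intro v
      rw [← (Submodule.projection_add_projection_eq_self hUW v : ((πU v : V) + ↑(πW v)) = v)]
      exact X.add_mem (hUX (πU v)) (hWX (πW v))
end
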